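/- For every real η with |η| < π, the root z₁(η) = ((2 − e^{iη}) + √((2 − e^{iη})² − 4))/2 of the quadratic z² − (2 − e^{iη})z + 1 = 0, chosen continuously in η with z₁(0) = e^{iπ/3}, has strictly positive imaginary part: Im z₁(η) > 0. -/

import Mathlib

open Real

/-- The classical dilogarithm `li₂(z) = -∫₀^z log(1-t)/t dt`, parametrized along the segment. -/
noncomputable def li2 (z : ℂ) : ℂ :=
  -∫ s in (0:ℝ)..1, Complex.log (1 - z * (s:ℂ)) / (s:ℂ)

/-- The Lobachevsky function `Λ(θ) = -∫₀^θ log |2 sin t| dt`. -/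
noncomputable def lobachevsky (θ : ℝ) : ℝ :=
  -∫ t in (0:ℝ)..θ, Real.log |2 * Real.sin t|

/-- The potential function `f₁(α; η) = li₂(-e^{-2iα}) - α² + ηα + π²/12`. -/
noncomputable def f₁ (η : ℝ) (α : ℂ) : ℂ :=
  li2 (-Complex.exp (-2*Complex.I*α)) - α^2 + (η:ℂ)*α + (π:ℂ)^2/12

/-- The potential function `f₂(α; η) = li₂(-e^{-2iα}) - α² - ηα + π²/12`. -/
noncomputable def f₂ (η : ℝ) (α : ℂ) : ℂ :=
  li2 (-Complex.exp (-2*Complex.I*α)) - α^2 - (η:ℂ)*α + (π:ℂ)^2/12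

/-- The Bloch–Wigner dilogarithm `D(z) = Im li₂(z) + Arg(1-z)·ln|z|`. -/
noncomputable def blochWigner (z : ℂ) : ℝ :=
  (li2 z).im + (1 - z).arg * Real.log ‖z‖

lemma im_z0 : (Complex.exp ((π:ℂ)*Complex.I/3)).im = Real.sin (π/3) := by
  have : (π:ℂ)*Complex.I/3 = ((π/3 : ℝ):ℂ) * Complex.I := by push_cast; ring
  rw [this, Complex.exp_ofReal_mul_I_im]

/-- For `|η| < π`, the root of `z² - (2 - e^{iη})z + 1 = 0` chosen continuously in `η`
with value `e^{iπ/3}` at `η = 0` has strictly positive imaginary part. -/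
theorem root_has_positive_imaginary_part (z : ℝ → ℂ)
    (hcont : ContinuousOn z (Set.Ioo (-π) π))
    (h0 : z 0 = Complex.exp ((π:ℂ)*Complex.I/3))
    (hroot : ∀ η ∈ Set.Ioo (-π) π,
      (z η)^2 - (2 - Complex.exp (Complex.I*(η:ℂ)))*(z η) + 1 = 0) :
    ∀ η ∈ Set.Ioo (-π) π, 0 < (z η).im := by
  have hpi : (0:ℝ) ∈ Set.Ioo (-π) π := ⟨neg_lt_zero.mpr Real.pi_pos, Real.pi_pos⟩
  have him0 : 0 < (z 0).im := by
    rw [h0, im_z0]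
    exact Real.sin_pos_of_pos_of_lt_pi (by positivity) (by linarith [Real.pi_pos])
  -- nonvanishing of Im z on Ioo
  have hne : ∀ η ∈ Set.Ioo (-π) π, (z η).im ≠ 0 := by
    intro η hη him
    have heq := hroot η hη
    -- z η is real
    have hx : z η = ((z η).re : ℂ) := by
      apply Complex.ext <;> simp [him]
    set x := (z η).re with hxdef
    have him_eq : Real.sin η = 0 ∨ x = 0 := by
      have := congrArg Complex.im heq
      rw [hx] at this
      simpa [Complex.exp_im, Complex.mul_im, Complex.mul_re, ← Complex.ofReal_pow] using this
    have hx0 : x ≠ 0 := by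
      intro h
      rw [hx, h] at heq
      simp at heq
    have hsin : Real.sin η = 0 := him_eq.resolve_right hx0
    have hη0 : η = 0 := by
      rcases Real.sin_eq_zero_iff.mp hsin with ⟨n, hn⟩
      have hn0 : n = 0 := by
        rcases hη with ⟨h1, h2⟩
        by_contra hne
        rcases lt_or_gt_of_ne hne with h | h
        · have : (n:ℝ) ≤ -1 := by exact_mod_cast Int.le_of_lt_add_one (by simpa using h)
          nlinarith [Real.pi_pos]
        · have : (1:ℝ) ≤ (n:ℝ) := by exact_mod_cast h
          nlinarith [Real.pi_pos]
      rw [hn0] at hn; simpa using hn.symm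
    rw [hη0] at him
    exact absurd him (ne_of_gt him0)
  -- IVT
  intro η hη
  by_contra hle
  push_neg at hle
  have hlt : (z η).im < 0 := lt_of_le_of_ne hle (hne η hη)
  have hg : ContinuousOn (fun t => (z t).im) (Set.Ioo (-π) π) :=
    Complex.continuous_im.comp_continuousOn hcont
  have := (isPreconnected_Ioo (a := -π) (b := π)).intermediate_value hη hpi hg
  have h0mem : (0:ℝ) ∈ Set.Icc ((z η).im) ((z 0).im) := ⟨le_of_lt hlt, le_of_lt him0⟩
  rcases this h0mem with ⟨ζ, hζ, hζ0⟩
  exact hne ζ hζ (by simpa using hζ0)
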